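/- For every set H ⊆ ℝ, the set {x ∈ H : H is porous at x} of points of H at which H is porous has Lebesgue outer measure zero. -/

import Mathlib

open MeasureTheory Filter Topology

/-- `gapLength H x ε` is the supremum of the lengths of the intervals contained in
`(x - ε, x + ε) \ H`. -/
noncomputable def gapLength (H : Set ℝ) (x ε : ℝ) : ℝ :=
  sSup {l : ℝ | ∃ a b : ℝ, l = b - a ∧ Set.Ioo a b ⊆ Set.Ioo (x - ε) (x + ε) \ H}

/-- A set `H ⊆ ℝ` is porous at `x` if `limsup_{ε → 0+} gapLength H x ε / ε > 0`. -/
def PorousAt (H : Set ℝ) (x : ℝ) : Prop :=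
  0 < Filter.limsup (fun ε => gapLength H x ε / ε) (𝓝[>] (0 : ℝ))

lemma gapSet_zero_mem (H : Set ℝ) (x ε : ℝ) :
    (0 : ℝ) ∈ {l : ℝ | ∃ a b : ℝ, l = b - a ∧ Set.Ioo a b ⊆ Set.Ioo (x - ε) (x + ε) \ H} :=
  ⟨0, 0, by simp, by simp⟩

lemma gapSet_bddAbove (H : Set ℝ) (x ε : ℝ) (hε : 0 < ε) :
    ∀ l ∈ {l : ℝ | ∃ a b : ℝ, l = b - a ∧ Set.Ioo a b ⊆ Set.Ioo (x - ε) (x + ε) \ H},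
      l ≤ 2 * ε := by
  rintro l ⟨a, b, rfl, hsub⟩
  by_cases hab : a < b
  · have hsub' : Set.Ioo a b ⊆ Set.Ioo (x - ε) (x + ε) := fun t ht => (hsub ht).1
    have := (Set.Ioo_subset_Ioo_iff hab).1 hsub'
    linarith [this.1, this.2]
  · push_neg at hab; linarith

lemma gapLength_nonneg (H : Set ℝ) (x ε : ℝ) (hε : 0 < ε) : 0 ≤ gapLength H x ε :=
  le_csSup ⟨2 * ε, fun l hl => gapSet_bddAbove H x ε hε l hl⟩ (gapSet_zero_mem H x ε)

/-- If `H` is porous at `x`, then `x` is not a Lebesgue density point of `H`. -/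
lemma not_tendsto_of_porousAt (H : Set ℝ) (x : ℝ) (hx : PorousAt H x) :
    ¬ Tendsto (fun r => volume (H ∩ Metric.closedBall x r) / volume (Metric.closedBall x r))
      (𝓝[>] (0 : ℝ)) (𝓝 1) := by
  intro htend
  set L := Filter.limsup (fun ε => gapLength H x ε / ε) (𝓝[>] (0 : ℝ)) with hL
  have hL0 : 0 < L := hx
  set c : ℝ := min (L / 2) (1 / 2) with hc
  have hc0 : 0 < c := lt_min (by linarith) (by norm_num)
  have hc1 : c ≤ 1 / 2 := min_le_right _ _
  have hcL : c < L := lt_of_le_of_lt (min_le_left _ _) (by linarith)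
  -- the function is frequently nonnegative, giving coboundedness
  have hpos : ∀ᶠ ε in 𝓝[>] (0 : ℝ), (0 : ℝ) ≤ gapLength H x ε / ε := by
    filter_upwards [self_mem_nhdsWithin] with ε hε
    exact div_nonneg (gapLength_nonneg H x ε hε) (le_of_lt hε)
  have hcob : IsCoboundedUnder (· ≤ ·) (𝓝[>] (0 : ℝ)) (fun ε => gapLength H x ε / ε) :=
    Filter.IsCoboundedUnder.of_frequently_ge hpos.frequently
  have hfreq : ∃ᶠ ε in 𝓝[>] (0 : ℝ), c < gapLength H x ε / ε :=
    frequently_lt_of_lt_limsup hcob hcL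
  -- eventually the density ratio is large
  have hlt1 : ENNReal.ofReal (1 - c / 2) < 1 := ENNReal.ofReal_lt_one.2 (by linarith)
  have heve : ∀ᶠ ε in 𝓝[>] (0 : ℝ),
      ENNReal.ofReal (1 - c / 2) <
        volume (H ∩ Metric.closedBall x ε) / volume (Metric.closedBall x ε) :=
    htend (Ioi_mem_nhds hlt1)
  have hcomb := (hfreq.and_eventually (heve.and self_mem_nhdsWithin)).exists
  obtain ⟨ε, hgap, hratio, hε⟩ := hcomb
  have hε : (0 : ℝ) < ε := hε
  -- extract a gap interval of length > c * ε
  have hcε : c * ε < gapLength H x ε := by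
    have h := (lt_div_iff₀ hε).1 hgap
    linarith
  obtain ⟨l, hlS, hll⟩ := exists_lt_of_lt_csSup ⟨0, gapSet_zero_mem H x ε⟩ hcε
  obtain ⟨a, b, rfl, hsub⟩ := hlS
  have hba : c * ε < b - a := hll
  have hab : a < b := by nlinarith
  -- the interval is inside the closed ball and disjoint from H
  have hHsub : H ∩ Metric.closedBall x ε ⊆ Set.Icc (x - ε) (x + ε) \ Set.Ioo a b := by
    rintro t ⟨htH, htb⟩
    rw [Real.closedBall_eq_Icc] at htb
    exact ⟨htb, fun htI => (hsub htI).2 htH⟩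
  have hIoo_sub : Set.Ioo a b ⊆ Set.Icc (x - ε) (x + ε) := fun t ht =>
    Set.Ioo_subset_Icc_self (hsub ht).1
  have hvol : volume (Set.Icc (x - ε) (x + ε) \ Set.Ioo a b)
      = ENNReal.ofReal (2 * ε) - ENNReal.ofReal (b - a) := by
    rw [measure_diff hIoo_sub measurableSet_Ioo.nullMeasurableSet
      (by simp [Real.volume_Ioo]), Real.volume_Icc, Real.volume_Ioo]
    congr 1
    ring_nf
  have hnum : volume (H ∩ Metric.closedBall x ε) ≤ ENNReal.ofReal ((2 - c) * ε) := by
    refine (measure_mono hHsub).trans ?_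
    rw [hvol, ← ENNReal.ofReal_sub _ (by linarith : (0:ℝ) ≤ b - a)]
    exact ENNReal.ofReal_le_ofReal (by nlinarith)
  have hball : volume (Metric.closedBall x ε) = ENNReal.ofReal (2 * ε) := by
    rw [Real.closedBall_eq_Icc, Real.volume_Icc]
    congr 1; ring
  have hratio' : volume (H ∩ Metric.closedBall x ε) / volume (Metric.closedBall x ε)
      ≤ ENNReal.ofReal (1 - c / 2) := by
    rw [hball]
    calc volume (H ∩ Metric.closedBall x ε) / ENNReal.ofReal (2 * ε)
        ≤ ENNReal.ofReal ((2 - c) * ε) / ENNReal.ofReal (2 * ε) :=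
          ENNReal.div_le_div_right hnum _
      _ = ENNReal.ofReal ((2 - c) * ε / (2 * ε)) :=
          (ENNReal.ofReal_div_of_pos (by linarith)).symm
      _ = ENNReal.ofReal (1 - c / 2) := by
          congr 1
          field_simp
  exact absurd hratio (not_lt.2 hratio')

/-- For every set `H ⊆ ℝ`, the set of points of `H` at which `H` is porous
has Lebesgue outer measure zero. -/
theorem measure_porousPoints_zero (H : Set ℝ) :
    volume {x | x ∈ H ∧ PorousAt H x} = 0 := by
  have hae := Besicovitch.ae_tendsto_measure_inter_div (volume : Measure ℝ) H
  have hzero : (volume.restrict H)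
      {x : ℝ | ¬ Tendsto (fun r => volume (H ∩ Metric.closedBall x r) /
        volume (Metric.closedBall x r)) (𝓝[>] (0 : ℝ)) (𝓝 1)} = 0 := ae_iff.1 hae
  refine le_antisymm ?_ zero_le
  calc volume {x | x ∈ H ∧ PorousAt H x}
      ≤ volume ({x : ℝ | ¬ Tendsto (fun r => volume (H ∩ Metric.closedBall x r) /
          volume (Metric.closedBall x r)) (𝓝[>] (0 : ℝ)) (𝓝 1)} ∩ H) := by
        refine measure_mono fun y hy => ⟨not_tendsto_of_porousAt H y hy.2, hy.1⟩
    _ ≤ (volume.restrict H) {x : ℝ | ¬ Tendsto (fun r => volume (H ∩ Metric.closedBall x r) /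
          volume (Metric.closedBall x r)) (𝓝[>] (0 : ℝ)) (𝓝 1)} :=
        Measure.le_restrict_apply _ _
    _ = 0 := hzero
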